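/- Let R ⊆ {0,1}^n be a relation preserved by the Boolean operation ∧ (coordinatewise meet) and containing the all-zero tuple 0^n. If coordinate i ∈ {1,…,n} is uniquely determined in R (for all s,t ∈ R, s[j]=t[j] for all j≠i implies s[i]=t[i]), then either t[i] = 0 for all t ∈ R, or there exist indices i₁,…,i_k ∈ {1,…,n}\{i} such that t[i] = t[i₁] ∧ … ∧ t[i_k] for every t ∈ R. -/

import Mathlib

/-- In a `∧`-closed Boolean relation containing the all-zero tuple, a uniquely
determined coordinate is either constantly `0` or a conjunction of other
coordinates. -/
theorem stmt_4 {n : ℕ} (R : Set (Fin n → Bool))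
    (hand : ∀ s ∈ R, ∀ t ∈ R, (fun j => s j && t j) ∈ R)
    (hzero : (fun _ : Fin n => false) ∈ R)
    (i : Fin n)
    (hdet : ∀ s ∈ R, ∀ t ∈ R, (∀ j ≠ i, s j = t j) → s i = t i) :
    (∀ t ∈ R, t i = false) ∨
    (∃ (k : ℕ), 0 < k ∧ ∃ idx : Fin k → Fin n, (∀ j, idx j ≠ i) ∧
      ∀ t ∈ R, t i = (Finset.univ.inf fun j : Fin k => t (idx j))) := by
  classical
  by_cases hall : ∀ t ∈ R, t i = false
  · exact Or.inl hall
  right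
  -- the finset of elements of R whose i-th coordinate is true
  have hfin : ({s | s ∈ R ∧ s i = true} : Set (Fin n → Bool)).Finite := Set.toFinite _
  set F := hfin.toFinset with hF
  have hFmem : ∀ s, s ∈ F ↔ s ∈ R ∧ s i = true := by
    intro s; simp [hF]
  have hFne : F.Nonempty := by
    push_neg at hall
    obtain ⟨t, ht, hti⟩ := hall
    exact ⟨t, (hFmem t).2 ⟨ht, by simpa using hti⟩⟩
  -- closure of R under finite meets (anchored at an element of R)
  have hclose : ∀ (T : Finset (Fin n → Bool)), (∀ s ∈ T, s ∈ R) →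
      ∀ s ∈ R, (fun j => s j && T.inf (fun t => t j)) ∈ R := by
    intro T
    induction T using Finset.induction_on with
    | empty => intro _ s hs; simpa using hs
    | insert a T ha ih =>
      intro hT s hs
      have h1 : (fun j => (s j && a j) && T.inf (fun t => t j)) ∈ R :=
        ih (fun t ht => hT t (Finset.mem_insert_of_mem ht))
          _ (hand s hs a (hT a (Finset.mem_insert_self a T)))
      have : (fun j => s j && (insert a T).inf (fun t => t j))
          = (fun j => (s j && a j) && T.inf (fun t => t j)) := by
        funext j
        simp [Finset.inf_insert, Bool.and_assoc]
      rw [this]; exact h1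
  -- the meet u of all elements of F
  set u : Fin n → Bool := fun j => F.inf (fun s => s j) with hu
  have hinf_iff : ∀ (G : Finset (Fin n → Bool)) (j : Fin n),
      G.inf (fun s => s j) = true ↔ ∀ s ∈ G, s j = true := by
    intro G j
    rw [show (true : Bool) = ⊤ from rfl, Finset.inf_eq_top_iff]
  obtain ⟨s₀, hs₀F⟩ := hFne
  have hs₀R : s₀ ∈ R := ((hFmem s₀).1 hs₀F).1
  have huR : u ∈ R := by
    have h1 := hclose F (fun s hs => ((hFmem s).1 hs).1) s₀ hs₀R
    have : (fun j => s₀ j && F.inf (fun s => s j)) = u := by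
      funext j
      cases h : F.inf (fun s => s j) with
      | false => simp [hu, h]
      | true =>
        have := (hinf_iff F j).1 h s₀ hs₀F
        simp [hu, h, this]
    rwa [this] at h1
  have hui : u i = true := by
    rw [hu]
    exact (hinf_iff F i).2 (fun s hs => ((hFmem s).1 hs).2)
  have huj : ∀ j, u j = true ↔ ∀ s ∈ R, s i = true → s j = true := by
    intro j
    rw [hu, hinf_iff]
    constructor
    · intro h s hsR hsi; exact h s ((hFmem s).2 ⟨hsR, hsi⟩)
    · intro h s hs; exact h s ((hFmem s).1 hs).1 ((hFmem s).1 hs).2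
  -- the index set J
  set J : Finset (Fin n) := Finset.univ.filter (fun j => j ≠ i ∧ u j = true) with hJ
  -- main claim
  have hmain : ∀ t ∈ R, (t i = true ↔ ∀ j ∈ J, t j = true) := by
    intro t ht
    constructor
    · intro hti j hjJ
      have hj : j ≠ i ∧ u j = true := by simpa [hJ] using hjJ
      exact (huj j).1 hj.2 t ht hti
    · intro h
      have hwR : (fun j => t j && u j) ∈ R := hand t ht u huR
      have hagree : ∀ j ≠ i, (t j && u j) = u j := by
        intro j hj
        cases hju : u j with
        | false => simp [hju]
        | true =>
          have : j ∈ J := by simp [hJ, hj, hju]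
          simp [hju, h j this]
      have := hdet _ hwR u huR hagree
      simp only [hui, Bool.and_true] at this
      exact this
  -- J is nonempty
  have hJne : J.Nonempty := by
    by_contra hemp
    rw [Finset.not_nonempty_iff_eq_empty] at hemp
    have := (hmain _ hzero).2 (by simp [hemp])
    simp at this
  -- build the index function
  have hk : 0 < J.card := Finset.card_pos.2 hJne
  refine ⟨J.card, hk, fun m => (J.equivFin.symm m : Fin n), ?_, ?_⟩
  · intro m
    have hm : ((J.equivFin.symm m : Fin n)) ∈ J := (J.equivFin.symm m).2
    exact ((Finset.mem_filter.1 hm).2).1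
  · intro t ht
    rw [Bool.eq_iff_iff, hmain t ht]
    rw [show (Finset.univ.inf fun m : Fin J.card => t (J.equivFin.symm m : Fin n)) = true
        ↔ ∀ m : Fin J.card, t (J.equivFin.symm m : Fin n) = true from by
      rw [show (true : Bool) = ⊤ from rfl, Finset.inf_eq_top_iff]; simp]
    constructor
    · intro h m; exact h _ (J.equivFin.symm m).2
    · intro h j hjJ
      have := h (J.equivFin ⟨j, hjJ⟩)
      simpa using this
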